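/- Let 𝒞 be an admissible set of relations, T(L) a 𝒞-realization, and T(R), T(R') ∈ ℬ_𝒞(T(L)). Then there exist t ≥ 0, indices (i_s, j_s) with 1 ≤ j_s ≤ i_s ≤ n−1, and signs p_s ∈ {1, −1} (1 ≤ s ≤ t) such that, setting R₀ = R and R_s = R_{s−1} + p_s δ^{i_s j_s}, every T(R_s) lies in ℬ_𝒞(T(L)) and R_t = R'. In other words, any two tableaux of ℬ_𝒞(T(L)) are connected by a chain of single-entry shifts by ±1 staying inside ℬ_𝒞(T(L)). -/

import Mathlib

/- Common setup: relations between boxes of Gelfand–Tsetlin tableaux,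
admissible sets of relations, tableaux satisfying relations, and the
Gelfand–Tsetlin operators on the space with basis `ℬ_𝒞(T(L))`. -/

noncomputable section

namespace GT

/-- A relation `src ≥ tgt` (`strict = false`) or `src > tgt` (`strict = true`)
between two boxes of a Gelfand–Tsetlin tableau. -/
structure GTRel where
  src : ℕ × ℕ
  tgt : ℕ × ℕ
  strict : Bool

/-- The set ℛ = ℛ^≥ ∪ ℛ^> ∪ ℛ⁰ of relations. -/
def RelSet (n : ℕ) : Set GTRel :=
  {r | (∃ i j j' : ℕ, 1 ≤ j ∧ j ≤ i ∧ i ≤ n ∧ 1 ≤ j' ∧ j' ≤ i - 1 ∧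
          r = ⟨(i, j), (i - 1, j'), false⟩) ∨
       (∃ i j j' : ℕ, 1 ≤ j ∧ j ≤ i ∧ i ≤ n ∧ 1 ≤ j' ∧ j' ≤ i - 1 ∧
          r = ⟨(i - 1, j'), (i, j), true⟩) ∨
       (∃ i j : ℕ, 1 ≤ i ∧ i ≤ n ∧ 1 ≤ j ∧ j ≤ n ∧ i ≠ j ∧
          r = ⟨(n, i), (n, j), false⟩)}

/-- The set 𝔙(𝒞) of vertices occurring in relations of `C`. -/
def vertexSet (C : Set GTRel) : Set (ℕ × ℕ) :=
  {v | ∃ r ∈ C, r.src = v ∨ r.tgt = v}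

/-- Two sets of relations are disconnected if their vertex sets are disjoint. -/
def Disconnected (C₁ C₂ : Set GTRel) : Prop :=
  vertexSet C₁ ∩ vertexSet C₂ = ∅

/-- A nonempty set of relations is indecomposable if it is not the union of two
nonempty disconnected subsets. -/
def Indecomposable (C : Set GTRel) : Prop :=
  C.Nonempty ∧ ∀ C₁ C₂ : Set GTRel, C₁.Nonempty → C₂.Nonempty →
    Disconnected C₁ C₂ → C ≠ C₁ ∪ C₂

/-- `D` is an indecomposable component of `C`. -/
def IsComponent (C D : Set GTRel) : Prop :=
  D ⊆ C ∧ Indecomposable D ∧ Disconnected D (C \ D)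

/-- One step along a relation of `C`. -/
def stepRel (C : Set GTRel) (a b : ℕ × ℕ) : Prop :=
  ∃ r ∈ C, r.src = a ∧ r.tgt = b

/-- One step along a strict relation of `C`. -/
def strictStepRel (C : Set GTRel) (a b : ℕ × ℕ) : Prop :=
  ∃ r ∈ C, r.src = a ∧ r.tgt = b ∧ r.strict = true

/-- `a ⪰_𝒞 b` : there is a (nonempty) chain of relations of `C` from `a` to `b`. -/
def Succeq (C : Set GTRel) : ℕ × ℕ → ℕ × ℕ → Prop :=
  Relation.TransGen (stepRel C)

/-- `a ≻_𝒞 b` : there is a chain of relations of `C` from `a` to `b` in which at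
least one relation is strict. -/
def Succ (C : Set GTRel) (a b : ℕ × ℕ) : Prop :=
  ∃ c d, Relation.ReflTransGen (stepRel C) a c ∧ strictStepRel C c d ∧
    Relation.ReflTransGen (stepRel C) d b

/-- An indecomposable set of relations is admissible. -/
def AdmissibleIndec (n : ℕ) (C : Set GTRel) : Prop :=
  Indecomposable C ∧
  (∀ k i j : ℕ, Succ C (k, i) (k, j) → i < j) ∧
  (∀ i j : ℕ, Succeq C (n, i) (n, j) → i < j) ∧
  (¬ ∃ k i j s t : ℕ, i < j ∧ s < t ∧
      (⟨(k, i), (k - 1, t), false⟩ : GTRel) ∈ C ∧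
      (⟨(k - 1, s), (k, j), true⟩ : GTRel) ∈ C) ∧
  (∀ k i j : ℕ, 1 ≤ k → k ≤ n - 1 →
      (k, i) ∈ vertexSet C → (k, j) ∈ vertexSet C →
      ∃ s t : ℕ, s < t ∧
        (((⟨(k, i), (k + 1, s), true⟩ : GTRel) ∈ C ∧
          (⟨(k + 1, s), (k, j), false⟩ : GTRel) ∈ C ∧
          (⟨(k, i), (k - 1, t), false⟩ : GTRel) ∈ C ∧
          (⟨(k - 1, t), (k, j), true⟩ : GTRel) ∈ C) ∨
         ((⟨(k, i), (k + 1, s), true⟩ : GTRel) ∈ C ∧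
          (⟨(k + 1, t), (k, j), false⟩ : GTRel) ∈ C)))

/-- An arbitrary set of relations is admissible iff all of its indecomposable
components are admissible. -/
def Admissible (n : ℕ) (C : Set GTRel) : Prop :=
  ∀ D, IsComponent C D → AdmissibleIndec n D

/-- `q^x := e^{t x}` where `t` is a fixed logarithm of `q`. -/
def qpow (t x : ℂ) : ℂ := Complex.exp (t * x)

/-- The quantum number `[x]_q = (q^x - q^{-x})/(q - q⁻¹)`. -/
def qnum (q t x : ℂ) : ℂ := (qpow t x - qpow t (-x)) / (q - q⁻¹)

/-- `1(q) = {x : ℂ | q^x = 1}`. -/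
def oneQ (t : ℂ) : Set ℂ := {x | qpow t x = 1}

/-- `ℤ_{≥0} + ½·1(q)`. -/
def intGeHalf (t : ℂ) : Set ℂ := {x | ∃ m : ℤ, 0 ≤ m ∧ ∃ y ∈ oneQ t, x = m + y / 2}

/-- `ℤ_{>0} + ½·1(q)`. -/
def intGtHalf (t : ℂ) : Set ℂ := {x | ∃ m : ℤ, 0 < m ∧ ∃ y ∈ oneQ t, x = m + y / 2}

/-- `ℤ + ½·1(q)`. -/
def intHalf (t : ℂ) : Set ℂ := {x | ∃ m : ℤ, ∃ y ∈ oneQ t, x = m + y / 2}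

/-- `1 + ½·1(q)`. -/
def onePlusHalf (t : ℂ) : Set ℂ := {x | ∃ y ∈ oneQ t, x = 1 + y / 2}

/-- A tableau `L` satisfies a single relation `r`. -/
def SatisfiesRel (t : ℂ) (L : ℕ × ℕ → ℂ) (r : GTRel) : Prop :=
  L r.src - L r.tgt ∈ (if r.strict then intGtHalf t else intGeHalf t)

/-- `a` and `b` lie in the same indecomposable component of `𝔙(𝒞)`. -/
def SameComponent (C : Set GTRel) (a b : ℕ × ℕ) : Prop :=
  a ∈ vertexSet C ∧ b ∈ vertexSet C ∧
  Relation.ReflTransGen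
    (fun x y => ∃ r ∈ C, (r.src = x ∨ r.tgt = x) ∧ (r.src = y ∨ r.tgt = y)) a b

/-- A tableau `L` satisfies the set of relations `C` (is a `C`-realization). -/
def SatisfiesSet (n : ℕ) (t : ℂ) (C : Set GTRel) (L : ℕ × ℕ → ℂ) : Prop :=
  (∀ r ∈ C, SatisfiesRel t L r) ∧
  (∀ k i j : ℕ, 1 ≤ i → i ≤ k → 1 ≤ j → j ≤ k → k ≤ n → i ≠ j →
    L (k, i) - L (k, j) ∈ intHalf t → SameComponent C (k, i) (k, j))

/-- An integer shift vector supported on rows `1, …, n-1`. -/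
def IsShift (n : ℕ) (z : ℕ × ℕ → ℤ) : Prop :=
  ∀ p : ℕ × ℕ, z p ≠ 0 → 1 ≤ p.2 ∧ p.2 ≤ p.1 ∧ p.1 ≤ n - 1

/-- The shifted tableau `L + z`. -/
def addShift (L : ℕ × ℕ → ℂ) (z : ℕ × ℕ → ℤ) : ℕ × ℕ → ℂ :=
  fun p => L p + z p

/-- `ℬ_𝒞(T(L))` : the integer shifts of `L` (rows `1,…,n-1`) satisfying `C`. -/
def BSet (n : ℕ) (t : ℂ) (C : Set GTRel) (L : ℕ × ℕ → ℂ) : Set (ℕ × ℕ → ℂ) :=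
  {R | (∃ z, IsShift n z ∧ R = addShift L z) ∧ SatisfiesSet n t C R}

/-- The tableau `δ^{kj}`. -/
def deltaT (k j : ℕ) : ℕ × ℕ → ℂ := fun p => if p = (k, j) then 1 else 0

/-- The coefficient `e_{kj}(R)` of `T(R + δ^{kj})` in `e_k T(R)`. -/
def ecoeff (q t : ℂ) (k j : ℕ) (R : ℕ × ℕ → ℂ) : ℂ :=
  -(∏ i ∈ Finset.Icc 1 (k + 1), qnum q t (R (k, j) - R (k + 1, i))) /
    ∏ i ∈ (Finset.Icc 1 k).erase j, qnum q t (R (k, j) - R (k, i))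

/-- The coefficient `f_{kj}(R)` of `T(R - δ^{kj})` in `f_k T(R)`. -/
def fcoeff (q t : ℂ) (k j : ℕ) (R : ℕ × ℕ → ℂ) : ℂ :=
  (∏ i ∈ Finset.Icc 1 (k - 1), qnum q t (R (k, j) - R (k - 1, i))) /
    ∏ i ∈ (Finset.Icc 1 k).erase j, qnum q t (R (k, j) - R (k, i))

open scoped Classical in
/-- The basis vector of `V` attached to a tableau, `0` if the tableau is not in the basis. -/
def tabVec (B : Set (ℕ × ℕ → ℂ)) (x : ℕ × ℕ → ℂ) : ↥B →₀ ℂ :=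
  if h : x ∈ B then Finsupp.single ⟨x, h⟩ 1 else 0

/-- Linear extension of a map defined on basis tableaux. -/
def extendLin {B : Set (ℕ × ℕ → ℂ)} (g : ↥B → (↥B →₀ ℂ)) :
    (↥B →₀ ℂ) →ₗ[ℂ] (↥B →₀ ℂ) :=
  Finsupp.lsum ℂ fun R => (LinearMap.id : ℂ →ₗ[ℂ] ℂ).smulRight (g R)

/-- The Gelfand–Tsetlin operator `e_k`. -/
def eOp (q t : ℂ) (B : Set (ℕ × ℕ → ℂ)) (k : ℕ) : (↥B →₀ ℂ) →ₗ[ℂ] (↥B →₀ ℂ) :=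
  extendLin fun R => ∑ j ∈ Finset.Icc 1 k,
    ecoeff q t k j R.1 • tabVec B (R.1 + deltaT k j)

/-- The Gelfand–Tsetlin operator `f_k`. -/
def fOp (q t : ℂ) (B : Set (ℕ × ℕ → ℂ)) (k : ℕ) : (↥B →₀ ℂ) →ₗ[ℂ] (↥B →₀ ℂ) :=
  extendLin fun R => ∑ j ∈ Finset.Icc 1 k,
    fcoeff q t k j R.1 • tabVec B (R.1 - deltaT k j)

/-- The weight `a_k(R) = Σ_{i=1}^k r_{ki} - Σ_{i=1}^{k-1} r_{k-1,i} + k`. -/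
def aWeight (k : ℕ) (R : ℕ × ℕ → ℂ) : ℂ :=
  (∑ i ∈ Finset.Icc 1 k, R (k, i)) - (∑ i ∈ Finset.Icc 1 (k - 1), R (k - 1, i)) + k

/-- The Gelfand–Tsetlin operator `q^{ε_k}`. -/
def qepsOp (t : ℂ) (B : Set (ℕ × ℕ → ℂ)) (k : ℕ) : (↥B →₀ ℂ) →ₗ[ℂ] (↥B →₀ ℂ) :=
  extendLin fun R => qpow t (aWeight k R.1) • tabVec B R.1

/-- The Gelfand–Tsetlin operator `q^{-ε_k}`, inverse of `q^{ε_k}`. -/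
def qepsInvOp (t : ℂ) (B : Set (ℕ × ℕ → ℂ)) (k : ℕ) : (↥B →₀ ℂ) →ₗ[ℂ] (↥B →₀ ℂ) :=
  extendLin fun R => qpow t (-aWeight k R.1) • tabVec B R.1

/-- All the defining relations of `U_q(gl_n)` hold for the Gelfand–Tsetlin
operators on the space with basis `B`. -/
def UqRelationsHold (n : ℕ) (q t : ℂ) (B : Set (ℕ × ℕ → ℂ)) : Prop :=
  (∀ k, 1 ≤ k → k ≤ n →
     qepsOp t B k ∘ₗ qepsInvOp t B k = LinearMap.id ∧
     qepsInvOp t B k ∘ₗ qepsOp t B k = LinearMap.id) ∧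
  (∀ k l, 1 ≤ k → k ≤ n → 1 ≤ l → l ≤ n →
     qepsOp t B k ∘ₗ qepsOp t B l = qepsOp t B l ∘ₗ qepsOp t B k) ∧
  (∀ k l, 1 ≤ k → k ≤ n → 1 ≤ l → l ≤ n - 1 →
     qepsOp t B k ∘ₗ eOp q t B l ∘ₗ qepsInvOp t B k =
       qpow t ((if k = l then 1 else 0) - (if k = l + 1 then 1 else 0)) • eOp q t B l) ∧
  (∀ k l, 1 ≤ k → k ≤ n → 1 ≤ l → l ≤ n - 1 →
     qepsOp t B k ∘ₗ fOp q t B l ∘ₗ qepsInvOp t B k =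
       qpow t (-((if k = l then 1 else 0) - (if k = l + 1 then 1 else 0))) • fOp q t B l) ∧
  (∀ i j, 1 ≤ i → i ≤ n - 1 → 1 ≤ j → j ≤ n - 1 →
     eOp q t B i ∘ₗ fOp q t B j - fOp q t B j ∘ₗ eOp q t B i =
       if i = j then
         (q - q⁻¹)⁻¹ •
           (qepsOp t B i ∘ₗ qepsInvOp t B (i + 1) -
             qepsInvOp t B i ∘ₗ qepsOp t B (i + 1))
       else 0) ∧
  (∀ i j, 1 ≤ i → i ≤ n - 1 → 1 ≤ j → j ≤ n - 1 → |(i : ℤ) - (j : ℤ)| = 1 →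
     eOp q t B i ∘ₗ eOp q t B i ∘ₗ eOp q t B j -
         (q + q⁻¹) • (eOp q t B i ∘ₗ eOp q t B j ∘ₗ eOp q t B i) +
         eOp q t B j ∘ₗ eOp q t B i ∘ₗ eOp q t B i = 0 ∧
     fOp q t B i ∘ₗ fOp q t B i ∘ₗ fOp q t B j -
         (q + q⁻¹) • (fOp q t B i ∘ₗ fOp q t B j ∘ₗ fOp q t B i) +
         fOp q t B j ∘ₗ fOp q t B i ∘ₗ fOp q t B i = 0) ∧
  (∀ i j, 1 ≤ i → i ≤ n - 1 → 1 ≤ j → j ≤ n - 1 → 1 < |(i : ℤ) - (j : ℤ)| →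
     eOp q t B i ∘ₗ eOp q t B j = eOp q t B j ∘ₗ eOp q t B i ∧
     fOp q t B i ∘ₗ fOp q t B j = fOp q t B j ∘ₗ fOp q t B i)

/-- A set of relations is realizable if for every tableau satisfying it, the
Gelfand–Tsetlin formulas define a `U_q(gl_n)`-module structure. -/
def Realizable (n : ℕ) (q t : ℂ) (C : Set GTRel) : Prop :=
  ∀ L : ℕ × ℕ → ℂ, SatisfiesSet n t C L → UqRelationsHold n q t (BSet n t C L)

/-- `C` implies `C'`. -/
def Implies (C C' : Set GTRel) : Prop :=
  (∀ a b, Succ C' a b → Succ C a b) ∧ (∀ a b, Succeq C' a b → Succeq C a b)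

/-- `C` is a maximal set of relations satisfied by `L`. -/
def MaximalFor (n : ℕ) (t : ℂ) (C : Set GTRel) (L : ℕ × ℕ → ℂ) : Prop :=
  SatisfiesSet n t C L ∧
  ∀ C' ⊆ RelSet n, SatisfiesSet n t C' L → Implies C C'

end GT

namespace GTAux
open GT

/-! ### Arithmetic of `intGeHalf` etc. -/

theorem half_unique {q t : ℂ} (hq : Complex.exp t = q)
    (hroot : ∀ m : ℕ, 0 < m → q ^ m ≠ 1)
    {m m' : ℤ} {y y' : ℂ} (hy : y ∈ oneQ t) (hy' : y' ∈ oneQ t)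
    (h : (m : ℂ) + y / 2 = (m' : ℂ) + y' / 2) : m = m' := by
  by_contra hne
  have h1 : Complex.exp (t * y) = 1 := hy
  have h2 : Complex.exp (t * y') = 1 := hy'
  have hyy : y' - y = ((2 * (m - m') : ℤ) : ℂ) := by push_cast; linear_combination -2 * h
  have h3 : Complex.exp (t * (y' - y)) = 1 := by
    rw [mul_sub, Complex.exp_sub, h2, h1]; norm_num
  have h4 : q ^ (2 * (m - m')) = 1 := by
    rw [← hq, ← Complex.exp_int_mul]
    rw [hyy] at h3; rw [← h3]; ring_nf
  set k : ℤ := 2 * (m - m') with hk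
  have hk0 : k ≠ 0 := by omega
  have h5 : q ^ k.natAbs = 1 := by
    rcases Int.natAbs_eq k with he | he
    · rw [he] at h4; exact_mod_cast h4
    · rw [he, zpow_neg, zpow_natCast, inv_eq_one] at h4; exact h4
  exact hroot k.natAbs (Int.natAbs_pos.2 hk0) h5

theorem mem_intGeHalf_shift_iff {q t : ℂ} (hq : Complex.exp t = q)
    (hroot : ∀ m : ℕ, 0 < m → q ^ m ≠ 1) (m d : ℤ) {y : ℂ} (hy : y ∈ oneQ t) :
    ((m : ℂ) + y / 2 + (d : ℤ) ∈ intGeHalf t) ↔ 0 ≤ m + d := by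
  constructor
  · rintro ⟨m', hm', y', hy', heq⟩
    have : ((m + d : ℤ) : ℂ) + y / 2 = (m' : ℂ) + y' / 2 := by push_cast; linear_combination heq
    have := half_unique hq hroot hy hy' this
    omega
  · intro hmd
    exact ⟨m + d, hmd, y, hy, by push_cast; ring⟩

theorem mem_intGtHalf_shift_iff {q t : ℂ} (hq : Complex.exp t = q)
    (hroot : ∀ m : ℕ, 0 < m → q ^ m ≠ 1) (m d : ℤ) {y : ℂ} (hy : y ∈ oneQ t) :
    ((m : ℂ) + y / 2 + (d : ℤ) ∈ intGtHalf t) ↔ 1 ≤ m + d := by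
  constructor
  · rintro ⟨m', hm', y', hy', heq⟩
    have : ((m + d : ℤ) : ℂ) + y / 2 = (m' : ℂ) + y' / 2 := by push_cast; linear_combination heq
    have := half_unique hq hroot hy hy' this
    omega
  · intro hmd
    exact ⟨m + d, by omega, y, hy, by push_cast; ring⟩

theorem intHalf_of_shift {t : ℂ} {x : ℂ} (d : ℤ) (h : x + (d : ℤ) ∈ intHalf t) :
    x ∈ intHalf t := by
  obtain ⟨m, y, hy, he⟩ := h
  exact ⟨m - d, y, hy, by push_cast; linear_combination he⟩

end GTAux
namespace GTAux
open GT

/-! ### Components and acyclicity -/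

/-- One step of connectivity between relations: they share a vertex. -/
def relConnStep (C : Set GTRel) (r r' : GTRel) : Prop :=
  r ∈ C ∧ r' ∈ C ∧ ∃ v, (r.src = v ∨ r.tgt = v) ∧ (r'.src = v ∨ r'.tgt = v)

/-- The indecomposable component of `C` containing `r₀`. -/
def compOf (C : Set GTRel) (r₀ : GTRel) : Set GTRel :=
  {r | Relation.ReflTransGen (relConnStep C) r₀ r ∧ r ∈ C}

theorem comp_subset (C : Set GTRel) (r₀ : GTRel) : compOf C r₀ ⊆ C := fun _ h => h.2

theorem comp_isComponent {C : Set GTRel} {r₀ : GTRel} (hr₀ : r₀ ∈ C) :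
    IsComponent C (compOf C r₀) := by
  have hmemside : ∀ (C₁ C₂ : Set GTRel), Disconnected C₁ C₂ → ∀ r, r ∈ C₁ → r ∉ C₂ := by
    intro C₁ C₂ hd r h1 h2
    have : r.src ∈ vertexSet C₁ ∩ vertexSet C₂ :=
      ⟨⟨r, h1, Or.inl rfl⟩, ⟨r, h2, Or.inl rfl⟩⟩
    rw [hd] at this; exact this
  refine ⟨comp_subset C r₀, ⟨⟨r₀, Relation.ReflTransGen.refl, hr₀⟩, ?_⟩, ?_⟩
  · intro C₁ C₂ h1 h2 hdisj heq
    have key : ∀ r, Relation.ReflTransGen (relConnStep C) r₀ r → r ∈ C →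
        (r ∈ C₁ ↔ r₀ ∈ C₁) := by
      intro r hconn
      induction hconn with
      | refl => intro _; rfl
      | @tail b c hb step ih =>
        intro hcC
        have hbC : b ∈ C := step.1
        have hbD : b ∈ compOf C r₀ := ⟨hb, hbC⟩
        have hcD : c ∈ compOf C r₀ := ⟨hb.tail step, hcC⟩
        rw [heq] at hbD hcD
        obtain ⟨v, hv1, hv2⟩ := step.2.2
        have same : (c ∈ C₁ ↔ b ∈ C₁) := by
          constructor
          · intro hc
            rcases hbD with hb1 | hb2
            · exact hb1
            · exfalso
              have : v ∈ vertexSet C₁ ∩ vertexSet C₂ := ⟨⟨c, hc, hv2⟩, ⟨b, hb2, hv1⟩⟩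
              rw [hdisj] at this; exact this
          · intro hbb
            rcases hcD with hc1 | hc2
            · exact hc1
            · exfalso
              have : v ∈ vertexSet C₁ ∩ vertexSet C₂ := ⟨⟨b, hbb, hv1⟩, ⟨c, hc2, hv2⟩⟩
              rw [hdisj] at this; exact this
        rw [same]; exact ih hbC
    have hr₀D : r₀ ∈ C₁ ∪ C₂ := by
      rw [← heq]; exact ⟨Relation.ReflTransGen.refl, hr₀⟩
    rcases hr₀D with h01 | h02
    · obtain ⟨r, hr2⟩ := h2
      have hrD : r ∈ compOf C r₀ := by rw [heq]; exact Or.inr hr2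
      have : r ∈ C₁ := (key r hrD.1 hrD.2).2 h01
      exact hmemside C₁ C₂ hdisj r this hr2
    · obtain ⟨r, hr1⟩ := h1
      have hrD : r ∈ compOf C r₀ := by rw [heq]; exact Or.inl hr1
      have h01 : r₀ ∉ C₁ := fun h => hmemside C₁ C₂ hdisj r₀ h h02
      exact h01 ((key r hrD.1 hrD.2).1 hr1)
  · -- Disconnected (compOf C r₀) (C \ compOf C r₀)
    rw [Disconnected, Set.eq_empty_iff_forall_notMem]
    rintro v ⟨⟨r, hrD, hv⟩, ⟨r', hr'D, hv'⟩⟩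
    have : r' ∈ compOf C r₀ := ⟨hrD.1.tail ⟨hrD.2, hr'D.1, v, hv, hv'⟩, hr'D.1⟩
    exact hr'D.2 this

end GTAux
namespace GTAux
open GT

theorem comp_mono {C : Set GTRel} {r₀ r : GTRel} (h : relConnStep C r₀ r) :
    compOf C r ⊆ compOf C r₀ := by
  rintro x ⟨hx, hxC⟩
  exact ⟨(Relation.ReflTransGen.single h).trans hx, hxC⟩

theorem chain_lift {C : Set GTRel} {a b : ℕ × ℕ}
    (h : Relation.TransGen (stepRel C) a b) :
    ∀ r₀ ∈ C, (r₀.src = a ∨ r₀.tgt = a) →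
      Relation.TransGen (stepRel (compOf C r₀)) a b := by
  induction h using Relation.TransGen.head_induction_on with
  | single hstep =>
    intro r₀ hr₀ hsh
    obtain ⟨r, hrC, hs, ht⟩ := hstep
    refine Relation.TransGen.single ⟨r, ?_, hs, ht⟩
    exact ⟨Relation.ReflTransGen.single ⟨hr₀, hrC, _, hsh, Or.inl hs⟩, hrC⟩
  | @head a' c hstep _ ih =>
    intro r₀ hr₀ hsh
    obtain ⟨r, hrC, hs, ht⟩ := hstep
    have h1 : Relation.TransGen (stepRel (compOf C r)) c b :=
      ih r hrC (Or.inr ht)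
    have hconn : relConnStep C r₀ r := ⟨hr₀, hrC, _, hsh, Or.inl hs⟩
    have h2 : Relation.TransGen (stepRel (compOf C r₀)) c b := by
      refine Relation.TransGen.mono ?_ _ _ h1
      rintro x y ⟨r', hr', hx, hy⟩
      exact ⟨r', comp_mono hconn hr', hx, hy⟩
    exact h2.head ⟨r, ⟨Relation.ReflTransGen.single hconn, hrC⟩, hs, ht⟩

/-- Nonstrict step. -/
def nsStep (D : Set GTRel) (x y : ℕ × ℕ) : Prop :=
  ∃ r ∈ D, r.src = x ∧ r.tgt = y ∧ r.strict = false

theorem strict_or_nonstrict {D : Set GTRel} {a b : ℕ × ℕ}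
    (h : Relation.TransGen (stepRel D) a b) :
    Succ D a b ∨ Relation.TransGen (nsStep D) a b := by
  induction h using Relation.TransGen.head_induction_on with
  | @single a' hstep =>
    obtain ⟨r, hrD, hs, ht⟩ := hstep
    cases hb : r.strict with
    | true => exact Or.inl ⟨a', b, Relation.ReflTransGen.refl, ⟨r, hrD, hs, ht, hb⟩,
        Relation.ReflTransGen.refl⟩
    | false => exact Or.inr (Relation.TransGen.single ⟨r, hrD, hs, ht, hb⟩)
  | @head a' c hstep htg ih =>
    obtain ⟨r, hrD, hs, ht⟩ := hstep
    rcases ih with ⟨u, v, h1, h2, h3⟩ | hns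
    · exact Or.inl ⟨u, v, h1.head ⟨r, hrD, hs, ht⟩, h2, h3⟩
    · cases hb : r.strict with
      | true =>
        refine Or.inl ⟨a', c, Relation.ReflTransGen.refl, ⟨r, hrD, hs, ht, hb⟩, ?_⟩
        exact (Relation.TransGen.mono (by intro x y h; obtain ⟨r', hr', hx, hy, _⟩ := h; exact ⟨r', hr', hx, hy⟩) _ _ hns).to_reflTransGen
      | false => exact Or.inr (hns.head ⟨r, hrD, hs, ht, hb⟩)

theorem nsStep_row {n : ℕ} {D : Set GTRel} (hD : D ⊆ RelSet n) {x y : ℕ × ℕ}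
    (h : nsStep D x y) : (y.1 < x.1 ∧ x.1 ≤ n) ∨ (x.1 = n ∧ y.1 = n) := by
  obtain ⟨r, hrD, hs, ht, hb⟩ := h
  rcases hD hrD with ⟨i, j, j', hj1, hji, hin, hj'1, hj'i, hr⟩ |
      ⟨i, j, j', hj1, hji, hin, hj'1, hj'i, hr⟩ | ⟨i, j, hi1, hin, hj1, hjn, hij, hr⟩
  · subst hr
    simp only at hs ht hb
    left
    rw [← hs, ← ht]
    simp only
    omega
  · subst hr; simp at hb
  · subst hr
    right
    rw [← hs, ← ht]
    simp only [and_self]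

theorem nsChain_row {n : ℕ} {D : Set GTRel} (hD : D ⊆ RelSet n) {a b : ℕ × ℕ}
    (h : Relation.TransGen (nsStep D) a b) :
    (b.1 < a.1 ∧ a.1 ≤ n) ∨ (a.1 = n ∧ b.1 = n) := by
  induction h with
  | single hstep => exact nsStep_row hD hstep
  | tail _ hstep ih =>
    have h2 := nsStep_row hD hstep
    omega

theorem transGen_exists_first {α : Type*} {r : α → α → Prop} {a b : α}
    (h : Relation.TransGen r a b) : ∃ c, r a c := by
  induction h using Relation.TransGen.head_induction_on with
  | single hstep => exact ⟨_, hstep⟩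
  | head hstep _ _ => exact ⟨_, hstep⟩

/-- Admissibility implies there are no directed cycles at all. -/
theorem no_cycle {n : ℕ} {C : Set GTRel} (hC : C ⊆ RelSet n) (hCadm : Admissible n C)
    (a : ℕ × ℕ) : ¬ Relation.TransGen (stepRel C) a a := by
  intro h
  obtain ⟨r₀, hr₀, hs⟩ : ∃ r₀ ∈ C, r₀.src = a := by
    obtain ⟨c, r, hr, hsrc, _⟩ := transGen_exists_first h
    exact ⟨r, hr, hsrc⟩
  set D := compOf C r₀ with hDdef
  have hDcomp : IsComponent C D := comp_isComponent hr₀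
  have hadm : AdmissibleIndec n D := hCadm D hDcomp
  have hDsub : D ⊆ RelSet n := fun x hx => hC (hDcomp.1 hx)
  have hchain : Relation.TransGen (stepRel D) a a := chain_lift h r₀ hr₀ (Or.inl hs)
  rcases strict_or_nonstrict hchain with hsucc | hns
  · have : a.2 < a.2 := hadm.2.1 a.1 a.2 a.2 hsucc
    omega
  · have hrow := nsChain_row hDsub hns
    have han : a.1 = n := by omega
    have hseq : Succeq D (n, a.2) (n, a.2) := by
      have : Relation.TransGen (stepRel D) (n, a.2) (n, a.2) := by
        have ha : a = (n, a.2) := by rw [← han]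
        rw [← ha]; exact Relation.TransGen.mono (by intro x y h; obtain ⟨r', hr', hx, hy, _⟩ := h; exact ⟨r', hr', hx, hy⟩) _ _ hns
      exact this
    have : a.2 < a.2 := hadm.2.2.1 a.2 a.2 hseq
    omega

end GTAux
namespace GTAux
open GT

/-! ### Integer feasibility and paths -/

/-- Integer feasibility of a shift vector with respect to levels `M`. -/
def IFeas (C : Set GTRel) (M : GTRel → ℤ) (z : ℕ × ℕ → ℤ) : Prop :=
  ∀ r ∈ C, (if r.strict = true then (1 : ℤ) else 0) ≤ M r + z r.src - z r.tgt

def goodIdx (n : ℕ) (a : ℕ × ℕ) : Prop := 1 ≤ a.2 ∧ a.2 ≤ a.1 ∧ a.1 ≤ n - 1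

/-- Partial sums of unit moves. -/
def partialZ (z : ℕ × ℕ → ℤ) (idx : ℕ → ℕ × ℕ) (p : ℕ → ℤ) (s : ℕ) : ℕ × ℕ → ℤ :=
  fun a => z a + ∑ u ∈ Finset.range s, p u * (if a = idx u then 1 else 0)

/-- Existence of a path of unit moves from `z` to `w` all whose partial stages
satisfy `G`. -/
def IPath (n : ℕ) (G : (ℕ × ℕ → ℤ) → Prop) (z w : ℕ × ℕ → ℤ) : Prop :=
  ∃ (N : ℕ) (idx : ℕ → ℕ × ℕ) (p : ℕ → ℤ),
    (∀ s < N, (p s = 1 ∨ p s = -1) ∧ goodIdx n (idx s)) ∧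
    (∀ s ≤ N, G (partialZ z idx p s)) ∧ partialZ z idx p N = w

theorem partialZ_zero (z : ℕ × ℕ → ℤ) (idx : ℕ → ℕ × ℕ) (p : ℕ → ℤ) :
    partialZ z idx p 0 = z := by
  funext a; simp [partialZ]

theorem IPath.refl {n : ℕ} {G : (ℕ × ℕ → ℤ) → Prop} {z : ℕ × ℕ → ℤ} (h : G z) :
    IPath n G z z := by
  refine ⟨0, fun _ => (1, 1), fun _ => 1, by omega, ?_, partialZ_zero _ _ _⟩
  intro s hs
  have : s = 0 := by omega
  subst this
  rw [partialZ_zero]; exact h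

theorem IPath.cons {n : ℕ} {G : (ℕ × ℕ → ℤ) → Prop} {z w : ℕ × ℕ → ℤ}
    (a : ℕ × ℕ) (e : ℤ) (he : e = 1 ∨ e = -1) (ha : goodIdx n a) (hz : G z)
    (h : IPath n G (fun b => z b + e * (if b = a then 1 else 0)) w) :
    IPath n G z w := by
  obtain ⟨N, idx, p, h1, h2, h3⟩ := h
  set z1 : ℕ × ℕ → ℤ := fun b => z b + e * (if b = a then 1 else 0) with hz1
  refine ⟨N + 1, fun s => if s = 0 then a else idx (s - 1),
    fun s => if s = 0 then e else p (s - 1), ?_, ?_, ?_⟩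
  case _ =>
    intro s hs
    rcases Nat.eq_zero_or_pos s with rfl | hpos
    · simpa using ⟨he, ha⟩
    · have hs' : s - 1 < N := by omega
      have := h1 (s - 1) hs'
      simp only [if_neg (by omega : ¬ s = 0)]
      exact this
  all_goals
    have key : ∀ s : ℕ, partialZ z (fun u => if u = 0 then a else idx (u - 1))
        (fun u => if u = 0 then e else p (u - 1)) (s + 1) = partialZ z1 idx p s := by
      intro s
      funext b
      simp only [partialZ, Finset.sum_range_succ']
      simp only [if_pos rfl, hz1]
      have : ∀ u, (if u + 1 = 0 then e else p (u + 1 - 1)) *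
          (if b = (if u + 1 = 0 then a else idx (u + 1 - 1)) then 1 else 0) =
          p u * (if b = idx u then 1 else 0) := by
        intro u
        simp only [if_neg (Nat.succ_ne_zero u), Nat.add_sub_cancel]
      rw [Finset.sum_congr rfl (fun u _ => this u)]
      simp only [if_true]
      ring
  case _ =>
    intro s hs
    rcases Nat.eq_zero_or_pos s with rfl | hpos
    · rw [partialZ_zero]; exact hz
    · obtain ⟨s', rfl⟩ : ∃ s', s = s' + 1 := ⟨s - 1, by omega⟩
      rw [key s']
      exact h2 s' (by omega)
  case _ =>
    rw [key N]; exact h3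

theorem IPath.trans {n : ℕ} {G : (ℕ × ℕ → ℤ) → Prop} {z w v : ℕ × ℕ → ℤ}
    (h : IPath n G z w) (h' : IPath n G w v) : IPath n G z v := by
  obtain ⟨N, idx, p, h1, h2, h3⟩ := h
  obtain ⟨N', idx', p', h1', h2', h3'⟩ := h'
  refine ⟨N + N', fun s => if s < N then idx s else idx' (s - N),
    fun s => if s < N then p s else p' (s - N), ?_, ?_, ?_⟩
  case _ =>
    intro s hs
    by_cases hsN : s < N
    · simpa only [if_pos hsN] using h1 s hsN
    · simp only [if_neg hsN]
      exact h1' (s - N) (by omega)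
  all_goals
    have key1 : ∀ s ≤ N, partialZ z (fun u => if u < N then idx u else idx' (u - N))
        (fun u => if u < N then p u else p' (u - N)) s = partialZ z idx p s := by
      intro s hsN
      funext b
      simp only [partialZ]
      congr 1
      refine Finset.sum_congr rfl (fun u hu => ?_)
      have : u < N := by have := Finset.mem_range.1 hu; omega
      simp [this]
    have key2 : ∀ s : ℕ, partialZ z (fun u => if u < N then idx u else idx' (u - N))
        (fun u => if u < N then p u else p' (u - N)) (N + s) = partialZ w idx' p' s := by
      intro s
      funext b
      simp only [partialZ, Finset.sum_range_add]
      have e1 : ∑ u ∈ Finset.range N, (if u < N then p u else p' (u - N)) *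
          (if b = (if u < N then idx u else idx' (u - N)) then 1 else 0)
          = ∑ u ∈ Finset.range N, p u * (if b = idx u then 1 else 0) := by
        refine Finset.sum_congr rfl (fun u hu => ?_)
        have : u < N := Finset.mem_range.1 hu
        simp [this]
      have e2 : ∀ u : ℕ, (if N + u < N then p (N + u) else p' (N + u - N)) *
          (if b = (if N + u < N then idx (N + u) else idx' (N + u - N)) then 1 else 0)
          = p' u * (if b = idx' u then 1 else 0) := by
        intro u
        have h1 : ¬ N + u < N := by omega
        simp only [if_neg h1, Nat.add_sub_cancel_left]
      rw [e1, Finset.sum_congr rfl (fun u _ => e2 u)]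
      have : w b = z b + ∑ u ∈ Finset.range N, p u * (if b = idx u then 1 else 0) := by
        rw [← h3]; rfl
      rw [this]; ring
  case _ =>
    intro s hs
    by_cases hsN : s ≤ N
    · rw [key1 s hsN]; exact h2 s hsN
    · obtain ⟨s', rfl⟩ : ∃ s', s = N + s' := ⟨s - N, by omega⟩
      rw [key2 s']
      exact h2' s' (by omega)
  case _ =>
    rw [key2 N']; exact h3'

end GTAux
namespace GTAux
open GT

theorem exists_min_no_cycle {α : Type*} [DecidableEq α] (T : α → α → Prop)
    (hacyc : ∀ a, ¬ Relation.TransGen T a a) :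
    ∀ S : Finset α, S.Nonempty → ∃ a ∈ S, ∀ b ∈ S, ¬ T a b := by
  classical
  intro S
  induction S using Finset.strongInduction with
  | _ S ih =>
    intro hS
    obtain ⟨a, ha⟩ := hS
    by_cases h : ∀ b ∈ S, ¬ T a b
    · exact ⟨a, ha, h⟩
    · push_neg at h
      obtain ⟨b, hb, hTb⟩ := h
      set S' := S.filter (fun c => Relation.TransGen T a c) with hS'
      have hss : S' ⊂ S := by
        refine ⟨Finset.filter_subset _ _, fun hsub => ?_⟩
        have : a ∈ S' := hsub ha
        rw [hS', Finset.mem_filter] at this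
        exact hacyc a this.2
      obtain ⟨a', ha', hmin⟩ := ih S' hss ⟨b, by
        rw [hS', Finset.mem_filter]; exact ⟨hb, Relation.TransGen.single hTb⟩⟩
      refine ⟨a', (Finset.filter_subset _ _) ha', fun c hc hTc => ?_⟩
      have hc' : c ∈ S' := by
        rw [hS', Finset.mem_filter]
        rw [hS', Finset.mem_filter] at ha'
        exact ⟨hc, ha'.2.tail hTc⟩
      exact hmin c hc' hTc

theorem flip_no_cycle {α : Type*} {T : α → α → Prop}
    (hacyc : ∀ a, ¬ Relation.TransGen T a a) (a : α) :
    ¬ Relation.TransGen (fun x y => T y x) a a := fun h =>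
  hacyc a (Relation.transGen_swap.1 h)

/-- The board of possibly-moving boxes. -/
def board (n : ℕ) : Finset (ℕ × ℕ) := Finset.Icc 1 (n - 1) ×ˢ Finset.Icc 1 (n - 1)

theorem goodIdx_mem_board {n : ℕ} {a : ℕ × ℕ} (h : goodIdx n a) : a ∈ board n := by
  obtain ⟨h1, h2, h3⟩ := h
  simp only [board, Finset.mem_product, Finset.mem_Icc]
  omega

theorem descend {n : ℕ} {C : Set GTRel} {M : GTRel → ℤ}
    (hacyc : ∀ a, ¬ Relation.TransGen (stepRel C) a a)
    (w : ℕ × ℕ → ℤ) (hwf : IFeas C M w) (hws : IsShift n w) :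
    ∀ (k : ℕ) (z : ℕ × ℕ → ℤ), IFeas C M z → IsShift n z → (∀ p, w p ≤ z p) →
      (∑ p ∈ board n, (z p - w p).toNat) ≤ k →
      IPath n (fun v => IFeas C M v ∧ IsShift n v) z w := by
  classical
  intro k
  induction k with
  | zero =>
    intro z hzf hzs hle hm
    have hzw : z = w := by
      funext a
      by_contra hne
      have hgood : goodIdx n a := by
        rcases (by omega : z a ≠ 0 ∨ w a ≠ 0) with h | h
        · exact hzs a h
        · exact hws a h
      have haB : a ∈ board n := goodIdx_mem_board hgood
      have h1 : (1 : ℕ) ≤ (z a - w a).toNat := by have := hle a; omega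
      have h2 : (z a - w a).toNat ≤ ∑ p ∈ board n, (z p - w p).toNat :=
        Finset.single_le_sum (f := fun p => (z p - w p).toNat)
          (fun p _ => Nat.zero_le _) haB
      omega
    rw [hzw]
    exact IPath.refl ⟨hwf, hws⟩
  | succ k ih =>
    intro z hzf hzs hle hm
    by_cases hzw : z = w
    · rw [hzw]; exact IPath.refl ⟨hwf, hws⟩
    · -- find a coordinate to decrement
      have hSne : (Finset.filter (fun a => w a < z a) (board n)).Nonempty := by
        have : ∃ a, z a ≠ w a := by
          by_contra hc; push_neg at hc; exact hzw (funext hc)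
        obtain ⟨a, ha⟩ := this
        refine ⟨a, Finset.mem_filter.2 ⟨goodIdx_mem_board ?_, by have := hle a; omega⟩⟩
        rcases (by omega : z a ≠ 0 ∨ w a ≠ 0) with h | h
        · exact hzs a h
        · exact hws a h
      set T : ℕ × ℕ → ℕ × ℕ → Prop := fun a b => ∃ r ∈ C, r.src = a ∧ r.tgt = b ∧
        M r + z a - z b = (if r.strict = true then 1 else 0) with hT
      have hacycT : ∀ a, ¬ Relation.TransGen T a a := by
        intro a ha
        exact hacyc a (Relation.TransGen.mono (by intro x y h; obtain ⟨r, hr, h1, h2, _⟩ := h; exact ⟨r, hr, h1, h2⟩) _ _ ha)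
      obtain ⟨a, haS, hamin⟩ := exists_min_no_cycle T hacycT _ hSne
      have haB : a ∈ board n := (Finset.mem_filter.1 haS).1
      have haz : w a < z a := (Finset.mem_filter.1 haS).2
      have hgood : goodIdx n a := by
        rcases (by omega : z a ≠ 0 ∨ w a ≠ 0) with h | h
        · exact hzs a h
        · exact hws a h
      set z1 : ℕ × ℕ → ℤ := fun b => z b + (-1) * (if b = a then 1 else 0) with hz1
      have hz1a : z1 a = z a - 1 := by simp [hz1]; ring
      have hz1ne : ∀ b, b ≠ a → z1 b = z b := by intro b hb; simp [hz1, hb]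
      have hz1f : IFeas C M z1 := by
        intro r hr
        have hz := hzf r hr
        set ε : ℤ := if r.strict = true then 1 else 0 with hε
        by_cases hsa : r.src = a <;> by_cases hta : r.tgt = a
        · rw [hsa, hta, hz1a]
          rw [hsa, hta] at hz
          omega
        · -- the dangerous case
          have e1 : z1 r.src = z a - 1 := by rw [hsa, hz1a]
          have e2 : z1 r.tgt = z r.tgt := hz1ne _ hta
          rw [e1, e2]
          rw [hsa] at hz
          by_cases htight : M r + z a - z r.tgt = (if r.strict = true then 1 else 0)
          · -- tight edge: target must equal w there
            have hTat : T a r.tgt := ⟨r, hr, hsa, rfl, htight⟩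
            have htS : r.tgt ∉ Finset.filter (fun b => w b < z b) (board n) :=
              fun hmem => hamin _ hmem hTat
            have hzt : z r.tgt = w r.tgt := by
              by_contra hne
              refine htS (Finset.mem_filter.2 ⟨goodIdx_mem_board ?_, by have := hle r.tgt; omega⟩)
              rcases (by omega : z r.tgt ≠ 0 ∨ w r.tgt ≠ 0) with h | h
              · exact hzs _ h
              · exact hws _ h
            have hwr := hwf r hr
            rw [hsa] at hwr
            omega
          · omega
        · have e1 : z1 r.src = z r.src := hz1ne _ hsa
          have e2 : z1 r.tgt = z r.tgt - 1 := by rw [hta]; exact hz1a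
          rw [e1, e2]
          omega
        · rw [hz1ne _ hsa, hz1ne _ hta]
          omega
      have hz1s : IsShift n z1 := by
        intro b hb
        by_cases hba : b = a
        · subst hba; exact ⟨hgood.1, hgood.2.1, hgood.2.2⟩
        · rw [hz1ne _ hba] at hb; exact hzs b hb
      have hle1 : ∀ p, w p ≤ z1 p := by
        intro p
        by_cases hpa : p = a
        · subst hpa; rw [hz1a]; omega
        · rw [hz1ne _ hpa]; exact hle p
      have hm1 : (∑ p ∈ board n, (z1 p - w p).toNat) ≤ k := by
        have hsplit := Finset.sum_eq_sum_sdiff_singleton_add haB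
          (fun p => (z1 p - w p).toNat)
        have hsplit' := Finset.sum_eq_sum_sdiff_singleton_add haB
          (fun p => (z p - w p).toNat)
        have htail : ∑ p ∈ board n \ {a}, (z1 p - w p).toNat
            = ∑ p ∈ board n \ {a}, (z p - w p).toNat := by
          refine Finset.sum_congr rfl (fun p hp => ?_)
          have hpa : p ≠ a := by
            have := Finset.mem_sdiff.1 hp
            simpa using this.2
          rw [hz1ne _ hpa]
        rw [hsplit, htail, hz1a] at *
        rw [hsplit'] at hm
        omega
      have hpath := ih z1 hz1f hz1s hle1 hm1
      exact IPath.cons a (-1) (Or.inr rfl) hgood ⟨hzf, hzs⟩ hpath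

end GTAux
namespace GTAux
open GT

theorem ascend {n : ℕ} {C : Set GTRel} {M : GTRel → ℤ}
    (hacyc : ∀ a, ¬ Relation.TransGen (stepRel C) a a)
    (w : ℕ × ℕ → ℤ) (hwf : IFeas C M w) (hws : IsShift n w) :
    ∀ (k : ℕ) (z : ℕ × ℕ → ℤ), IFeas C M z → IsShift n z → (∀ p, z p ≤ w p) →
      (∑ p ∈ board n, (w p - z p).toNat) ≤ k →
      IPath n (fun v => IFeas C M v ∧ IsShift n v) z w := by
  classical
  intro k
  induction k with
  | zero =>
    intro z hzf hzs hle hm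
    have hzw : z = w := by
      funext a
      by_contra hne
      have hgood : goodIdx n a := by
        rcases (by omega : z a ≠ 0 ∨ w a ≠ 0) with h | h
        · exact hzs a h
        · exact hws a h
      have haB : a ∈ board n := goodIdx_mem_board hgood
      have h1 : (1 : ℕ) ≤ (w a - z a).toNat := by have := hle a; omega
      have h2 : (w a - z a).toNat ≤ ∑ p ∈ board n, (w p - z p).toNat :=
        Finset.single_le_sum (f := fun p => (w p - z p).toNat)
          (fun p _ => Nat.zero_le _) haB
      omega
    rw [hzw]
    exact IPath.refl ⟨hwf, hws⟩
  | succ k ih =>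
    intro z hzf hzs hle hm
    by_cases hzw : z = w
    · rw [hzw]; exact IPath.refl ⟨hwf, hws⟩
    · have hSne : (Finset.filter (fun a => z a < w a) (board n)).Nonempty := by
        have : ∃ a, z a ≠ w a := by
          by_contra hc; push_neg at hc; exact hzw (funext hc)
        obtain ⟨a, ha⟩ := this
        refine ⟨a, Finset.mem_filter.2 ⟨goodIdx_mem_board ?_, by have := hle a; omega⟩⟩
        rcases (by omega : z a ≠ 0 ∨ w a ≠ 0) with h | h
        · exact hzs a h
        · exact hws a h
      -- `T a b` : tight edge of `C` from `b` into `a`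
      set T : ℕ × ℕ → ℕ × ℕ → Prop := fun a b => ∃ r ∈ C, r.src = b ∧ r.tgt = a ∧
        M r + z b - z a = (if r.strict = true then 1 else 0) with hT
      have hacycT : ∀ a, ¬ Relation.TransGen T a a := by
        intro a ha
        refine flip_no_cycle (T := fun x y => ∃ r ∈ C, r.src = x ∧ r.tgt = y ∧
          M r + z x - z y = (if r.strict = true then 1 else 0)) ?_ a ha
        intro b hb
        exact hacyc b (Relation.TransGen.mono (by intro x y h; obtain ⟨r, hr, h1, h2, _⟩ := h; exact ⟨r, hr, h1, h2⟩) _ _ hb)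
      obtain ⟨a, haS, hamin⟩ := exists_min_no_cycle T hacycT _ hSne
      have haB : a ∈ board n := (Finset.mem_filter.1 haS).1
      have haz : z a < w a := (Finset.mem_filter.1 haS).2
      have hgood : goodIdx n a := by
        rcases (by omega : z a ≠ 0 ∨ w a ≠ 0) with h | h
        · exact hzs a h
        · exact hws a h
      set z1 : ℕ × ℕ → ℤ := fun b => z b + 1 * (if b = a then 1 else 0) with hz1
      have hz1a : z1 a = z a + 1 := by simp [hz1]
      have hz1ne : ∀ b, b ≠ a → z1 b = z b := by intro b hb; simp [hz1, hb]
      have hz1f : IFeas C M z1 := by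
        intro r hr
        have hz := hzf r hr
        set ε : ℤ := if r.strict = true then 1 else 0 with hε
        by_cases hsa : r.src = a <;> by_cases hta : r.tgt = a
        · rw [hsa, hta, hz1a]
          rw [hsa, hta] at hz
          omega
        · have e1 : z1 r.src = z r.src + 1 := by rw [hsa]; exact hz1a
          have e2 : z1 r.tgt = z r.tgt := hz1ne _ hta
          rw [e1, e2]
          omega
        · -- the dangerous case : an edge into `a`
          have e1 : z1 r.src = z r.src := hz1ne _ hsa
          have e2 : z1 r.tgt = z a + 1 := by rw [hta]; exact hz1a
          rw [e1, e2]
          rw [hta] at hz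
          by_cases htight : M r + z r.src - z a = ε
          · have hTat : T a r.src := ⟨r, hr, rfl, hta, htight⟩
            have htS : r.src ∉ Finset.filter (fun b => z b < w b) (board n) :=
              fun hmem => hamin _ hmem hTat
            have hzt : z r.src = w r.src := by
              by_contra hne
              refine htS (Finset.mem_filter.2 ⟨goodIdx_mem_board ?_, by have := hle r.src; omega⟩)
              rcases (by omega : z r.src ≠ 0 ∨ w r.src ≠ 0) with h | h
              · exact hzs _ h
              · exact hws _ h
            have hwr := hwf r hr
            rw [hta] at hwr
            omega
          · omega
        · rw [hz1ne _ hsa, hz1ne _ hta]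
          omega
      have hz1s : IsShift n z1 := by
        intro b hb
        by_cases hba : b = a
        · subst hba; exact ⟨hgood.1, hgood.2.1, hgood.2.2⟩
        · rw [hz1ne _ hba] at hb; exact hzs b hb
      have hle1 : ∀ p, z1 p ≤ w p := by
        intro p
        by_cases hpa : p = a
        · subst hpa; rw [hz1a]; omega
        · rw [hz1ne _ hpa]; exact hle p
      have hm1 : (∑ p ∈ board n, (w p - z1 p).toNat) ≤ k := by
        have hsplit := Finset.sum_eq_sum_sdiff_singleton_add haB
          (fun p => (w p - z1 p).toNat)
        have hsplit' := Finset.sum_eq_sum_sdiff_singleton_add haB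
          (fun p => (w p - z p).toNat)
        have htail : ∑ p ∈ board n \ {a}, (w p - z1 p).toNat
            = ∑ p ∈ board n \ {a}, (w p - z p).toNat := by
          refine Finset.sum_congr rfl (fun p hp => ?_)
          have hpa : p ≠ a := by
            have := Finset.mem_sdiff.1 hp
            simpa using this.2
          rw [hz1ne _ hpa]
        rw [hsplit, htail, hz1a] at *
        rw [hsplit'] at hm
        omega
      have hpath := ih z1 hz1f hz1s hle1 hm1
      exact IPath.cons a 1 (Or.inl rfl) hgood ⟨hzf, hzs⟩ hpath

end GTAux
namespace GTAux
open GT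

theorem satRel_iff {q t : ℂ} (hq : Complex.exp t = q)
    (hroot : ∀ m : ℕ, 0 < m → q ^ m ≠ 1) {L : ℕ × ℕ → ℂ} {r : GTRel} {m : ℤ} {y : ℂ}
    (hy : y ∈ oneQ t) (he : L r.src - L r.tgt = (m : ℂ) + y / 2) (z : ℕ × ℕ → ℤ) :
    SatisfiesRel t (addShift L z) r ↔
      (if r.strict = true then (1 : ℤ) else 0) ≤ m + z r.src - z r.tgt := by
  have hdiff : addShift L z r.src - addShift L z r.tgt
      = (m : ℂ) + y / 2 + ((z r.src - z r.tgt : ℤ) : ℂ) := by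
    simp only [addShift]; push_cast; linear_combination he
  unfold SatisfiesRel
  rw [hdiff]
  cases hs : r.strict with
  | false =>
    simp only [hs, Bool.false_eq_true, if_false]
    rw [mem_intGeHalf_shift_iff hq hroot m _ hy]
    omega
  | true =>
    simp only [hs, if_true]
    rw [mem_intGtHalf_shift_iff hq hroot m _ hy]
    omega

theorem satSet_of_IFeas {n : ℕ} {q t : ℂ} (hq : Complex.exp t = q)
    (hroot : ∀ m : ℕ, 0 < m → q ^ m ≠ 1) {C : Set GTRel} {L : ℕ × ℕ → ℂ}
    (hL : SatisfiesSet n t C L) {M : GTRel → ℤ} {Y : GTRel → ℂ}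
    (hMY : ∀ r, r ∈ C → Y r ∈ oneQ t ∧ L r.src - L r.tgt = (M r : ℂ) + Y r / 2)
    (z : ℕ × ℕ → ℤ) (hf : IFeas C M z) : SatisfiesSet n t C (addShift L z) := by
  constructor
  · intro r hr
    obtain ⟨hy, he⟩ := hMY r hr
    exact (satRel_iff hq hroot hy he z).2 (hf r hr)
  · intro k i j h1 h2 h3 h4 h5 h6 hmem
    have hmem' : (L (k, i) - L (k, j)) + ((z (k, i) - z (k, j) : ℤ) : ℂ) ∈ intHalf t := by
      have : (L (k, i) - L (k, j)) + ((z (k, i) - z (k, j) : ℤ) : ℂ)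
          = addShift L z (k, i) - addShift L z (k, j) := by
        simp only [addShift]; push_cast; ring
      rw [this]; exact hmem
    exact hL.2 k i j h1 h2 h3 h4 h5 h6 (intHalf_of_shift _ hmem')

theorem IFeas_of_sat {q t : ℂ} (hq : Complex.exp t = q)
    (hroot : ∀ m : ℕ, 0 < m → q ^ m ≠ 1) {C : Set GTRel} {L : ℕ × ℕ → ℂ}
    {M : GTRel → ℤ} {Y : GTRel → ℂ}
    (hMY : ∀ r, r ∈ C → Y r ∈ oneQ t ∧ L r.src - L r.tgt = (M r : ℂ) + Y r / 2)
    (z : ℕ × ℕ → ℤ) (hsat : ∀ r ∈ C, SatisfiesRel t (addShift L z) r) : IFeas C M z := by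
  intro r hr
  obtain ⟨hy, he⟩ := hMY r hr
  exact (satRel_iff hq hroot hy he z).1 (hsat r hr)

end GTAux
open GT in
/-- any two tableaux of `ℬ_𝒞(T(L))` are connected by a chain of
single-entry shifts by `±1` staying inside `ℬ_𝒞(T(L))`. -/
theorem basis_connected_by_single_shifts
    (n : ℕ) (hn : 2 ≤ n) (q t : ℂ) (hq : Complex.exp t = q)
    (hroot : ∀ m : ℕ, 0 < m → q ^ m ≠ 1)
    (C : Set GTRel) (hC : C ⊆ RelSet n) (hCadm : Admissible n C)
    (L : ℕ × ℕ → ℂ) (hL : SatisfiesSet n t C L)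
    (R R' : ℕ × ℕ → ℂ) (hR : R ∈ BSet n t C L) (hR' : R' ∈ BSet n t C L) :
    ∃ (N : ℕ) (idx : ℕ → ℕ × ℕ) (p : ℕ → ℤ),
      (∀ s, s < N → (p s = 1 ∨ p s = -1) ∧
        1 ≤ (idx s).2 ∧ (idx s).2 ≤ (idx s).1 ∧ (idx s).1 ≤ n - 1) ∧
      (∀ s, s ≤ N →
        (fun pt => R pt + ∑ u ∈ Finset.range s, (p u : ℂ) * deltaT (idx u).1 (idx u).2 pt)
          ∈ BSet n t C L) ∧
      (fun pt => R pt + ∑ u ∈ Finset.range N, (p u : ℂ) * deltaT (idx u).1 (idx u).2 pt)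
        = R' := by
  classical
  obtain ⟨⟨z, hzs, hzeq⟩, hzsat⟩ := hR
  obtain ⟨⟨z', hz's, hz'eq⟩, hz'sat⟩ := hR'
  -- choose integer levels for the relations of `C` with respect to `L`
  have hex : ∀ r : GTRel, ∃ (m : ℤ) (y : ℂ), r ∈ C →
      (y ∈ oneQ t ∧ L r.src - L r.tgt = (m : ℂ) + y / 2) := by
    intro r
    by_cases hr : r ∈ C
    · have hsat := hL.1 r hr
      unfold SatisfiesRel at hsat
      cases hs : r.strict with
      | false =>
        rw [hs] at hsat
        simp only [Bool.false_eq_true, if_false] at hsat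
        obtain ⟨m, _, y, hy, he⟩ := hsat
        exact ⟨m, y, fun _ => ⟨hy, he⟩⟩
      | true =>
        rw [hs] at hsat
        simp only [if_true] at hsat
        obtain ⟨m, _, y, hy, he⟩ := hsat
        exact ⟨m, y, fun _ => ⟨hy, he⟩⟩
    · exact ⟨0, 0, fun h => absurd h hr⟩
  choose M Y hMY using hex
  have hacyc : ∀ a, ¬ Relation.TransGen (stepRel C) a a := GTAux.no_cycle hC hCadm
  -- integer feasibility of the two shifts
  rw [hzeq] at hzsat
  rw [hz'eq] at hz'sat
  have hfz : GTAux.IFeas C M z := GTAux.IFeas_of_sat hq hroot hMY z hzsat.1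
  have hfz' : GTAux.IFeas C M z' := GTAux.IFeas_of_sat hq hroot hMY z' hz'sat.1
  -- the pointwise minimum
  set w : ℕ × ℕ → ℤ := fun a => min (z a) (z' a) with hw
  have hwf : GTAux.IFeas C M w := by
    intro r hr
    have h1 := hfz r hr
    have h2 := hfz' r hr
    have e1 : w r.src = min (z r.src) (z' r.src) := rfl
    have e2 : w r.tgt = min (z r.tgt) (z' r.tgt) := rfl
    rw [e1, e2]
    omega
  have hws : IsShift n w := by
    intro a ha
    have : z a ≠ 0 ∨ z' a ≠ 0 := by
      have : w a = min (z a) (z' a) := rfl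
      omega
    rcases this with h | h
    · exact hzs a h
    · exact hz's a h
  have hpath1 : GTAux.IPath n (fun v => GTAux.IFeas C M v ∧ IsShift n v) z w :=
    GTAux.descend hacyc w hwf hws _ z hfz hzs (fun a => min_le_left _ _) le_rfl
  have hpath2 : GTAux.IPath n (fun v => GTAux.IFeas C M v ∧ IsShift n v) w z' :=
    GTAux.ascend hacyc z' hfz' hz's _ w hwf hws (fun a => min_le_right _ _) le_rfl
  obtain ⟨N, idx, p, hsteps, hstage, hfinal⟩ := hpath1.trans hpath2
  have hbridge : ∀ s : ℕ,
      (fun pt => R pt + ∑ u ∈ Finset.range s, (p u : ℂ) * deltaT (idx u).1 (idx u).2 pt)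
        = addShift L (GTAux.partialZ z idx p s) := by
    intro s
    funext pt
    rw [hzeq]
    simp only [addShift, GTAux.partialZ, deltaT, Prod.mk.eta]
    push_cast [apply_ite (fun x : ℤ => (x : ℂ))]
    ring
  refine ⟨N, idx, p, ?_, ?_, ?_⟩
  · intro s hs
    obtain ⟨hp, hg⟩ := hsteps s hs
    exact ⟨hp, hg.1, hg.2.1, hg.2.2⟩
  · intro s hs
    rw [hbridge s]
    obtain ⟨hf, hsh⟩ := hstage s hs
    exact ⟨⟨GTAux.partialZ z idx p s, hsh, rfl⟩, GTAux.satSet_of_IFeas hq hroot hL hMY _ hf⟩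
  · rw [hbridge N, hfinal, ← hz'eq]
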